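/- Suppose κ satisfies Assumption 1. Let (f^(i), x̂^(i)) satisfy f^(i) ∈ 𝔓(x̂^(i−1)) and x̂^(i) ∈ 𝔛(f^(i)) for every i. Suppose that along an infinite subset {i_l} of ℕ: the policies f^(i_l) converge to a non-degenerate policy f_{k:N}, the estimates x̂^(i_l) converge componentwise in d to x̂_{k:N}, and x̂^(i_l−1) converge componentwise in d to some x̂'_{k:N}. Then x̂_{k:N} ∈ 𝔛(f_{k:N}). -/

import Mathlib

open MeasureTheory Filter
open scoped ENNReal NNReal Topology

noncomputable section

/-- The state space `S = ℝ² × [0, 2π)`. -/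
abbrev S : Type := {x : ℝ × ℝ × ℝ // x.2.2 ∈ Set.Ico (0 : ℝ) (2 * Real.pi)}

/-- The metric `d` on `S`. -/
noncomputable def dS (x y : S) : ℝ :=
  Real.sqrt ((x.1.1 - y.1.1) ^ 2 + (x.1.2.1 - y.1.2.1) ^ 2
    + 2 * (Real.cos x.1.2.2 - Real.cos y.1.2.2) ^ 2
    + 2 * (Real.sin x.1.2.2 - Real.sin y.1.2.2) ^ 2)

/-- The initial state `x₀ = (0,0,0)`. -/
def origin : S := ⟨(0, 0, 0), ⟨le_rfl, by positivity⟩⟩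

/-- `κ` is a Markov kernel on `S`. -/
def IsMarkov (κ : S → Measure S) : Prop :=
  (∀ x, IsProbabilityMeasure (κ x)) ∧
    ∀ A : Set S, MeasurableSet A → Measurable fun x => κ x A

/-- Continuity of a real-valued function with respect to the metric `dS`. -/
def DContinuous (g : S → ℝ) : Prop :=
  ∀ x : S, ∀ ε : ℝ, 0 < ε → ∃ δ : ℝ, 0 < δ ∧ ∀ y : S, dS x y < δ → |g y - g x| < ε

/-- Openness with respect to the metric `dS`. -/
def DOpen (O : Set S) : Prop :=
  ∀ x ∈ O, ∃ δ : ℝ, 0 < δ ∧ ∀ y : S, dS x y < δ → y ∈ O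

/-- Assumption 1 on the kernel `κ`. -/
def Assumption1 (κ : S → Measure S) : Prop :=
  (∀ A : Set S, MeasurableSet A → DContinuous fun x => (κ x A).toReal) ∧
    ∀ O : Set S, DOpen O → O.Nonempty → ∀ x : S, 0 < κ x O

/-- Auxiliary downward value recursion; the first argument is the number
`N + 1 - j` of remaining stages. -/
noncomputable def Jaux (κ : S → Measure S) (c' : ℕ → ℝ) (xhat : ℕ → S) :
    ℕ → ℕ → S → ℝ≥0∞
  | 0, _, _ => 0
  | m + 1, j, x =>
      min (ENNReal.ofReal (dS x (xhat j) ^ 2) + ∫⁻ y, Jaux κ c' xhat m (j + 1) y ∂(κ x))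
        (ENNReal.ofReal (c' j))

/-- The optimal cost-to-go `J*_j(x, x̂_{j:N})`. -/
noncomputable def JJ (κ : S → Measure S) (c' : ℕ → ℝ) (N : ℕ) (xhat : ℕ → S)
    (j : ℕ) (x : S) : ℝ≥0∞ :=
  Jaux κ c' xhat (N + 1 - j) j x

/-- `G_j(x, x̂_{j:N}) = ∫ J*_j(y, x̂_{j:N}) κ(x)(dy)`. -/
noncomputable def Gj (κ : S → Measure S) (c' : ℕ → ℝ) (N : ℕ) (xhat : ℕ → S)
    (j : ℕ) (x : S) : ℝ≥0∞ :=
  ∫⁻ y, JJ κ c' N xhat j y ∂(κ x)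

/-- `G(x̂_{k:N}) = G_k(x₀, x̂_{k:N})`. -/
noncomputable def Gtot (κ : S → Measure S) (c' : ℕ → ℝ) (k N : ℕ) (xhat : ℕ → S) : ℝ≥0∞ :=
  Gj κ c' N xhat k origin

/-- A randomized policy: a tuple of Borel measurable functions `f_j : S → [0,1]`. -/
def IsPolicy (k N : ℕ) (f : ℕ → S → ℝ≥0∞) : Prop :=
  ∀ j, k ≤ j → j ≤ N → Measurable (f j) ∧ ∀ x, f j x ≤ 1

/-- Auxiliary cost-to-go recursion for a policy; first argument is `N + 1 - j`. -/
noncomputable def Vaux (κ : S → Measure S) (c' : ℕ → ℝ) (xhat : ℕ → S)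
    (f : ℕ → S → ℝ≥0∞) : ℕ → ℕ → S → ℝ≥0∞
  | 0, _, _ => 0
  | m + 1, j, x =>
      f j x * (ENNReal.ofReal (dS x (xhat j) ^ 2) + ∫⁻ y, Vaux κ c' xhat f m (j + 1) y ∂(κ x))
        + (1 - f j x) * ENNReal.ofReal (c' j)

/-- The cost-to-go `V_j` of a policy `f` with estimates `x̂`. -/
noncomputable def VV (κ : S → Measure S) (c' : ℕ → ℝ) (N : ℕ) (xhat : ℕ → S)
    (f : ℕ → S → ℝ≥0∞) (j : ℕ) (x : S) : ℝ≥0∞ :=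
  Vaux κ c' xhat f (N + 1 - j) j x

/-- The total expected cost `C(f_{k:N}, x̂_{k:N})`. -/
noncomputable def Cost (κ : S → Measure S) (c' : ℕ → ℝ) (k N : ℕ) (xhat : ℕ → S)
    (f : ℕ → S → ℝ≥0∞) : ℝ≥0∞ :=
  ∫⁻ y, VV κ c' N xhat f k y ∂(κ origin)

/-- `f ∈ 𝔓(x̂_{k:N})`: `f` minimizes the cost over all randomized policies. -/
def inP (κ : S → Measure S) (c' : ℕ → ℝ) (k N : ℕ) (xhat : ℕ → S)
    (f : ℕ → S → ℝ≥0∞) : Prop :=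
  IsPolicy k N f ∧
    ∀ g : ℕ → S → ℝ≥0∞, IsPolicy k N g → Cost κ c' k N xhat f ≤ Cost κ c' k N xhat g

/-- `x̂ ∈ 𝔛(f_{k:N})`: the estimates minimize the cost for the policy `f`. -/
def inX (κ : S → Measure S) (c' : ℕ → ℝ) (k N : ℕ) (f : ℕ → S → ℝ≥0∞)
    (xhat : ℕ → S) : Prop :=
  ∀ yhat : ℕ → S, Cost κ c' k N xhat f ≤ Cost κ c' k N yhat f

/-- Conditioning a measure on "no transmission" at stage `j`. -/
noncomputable def condMeas (f : ℕ → S → ℝ≥0∞) (j : ℕ) (μ : Measure S) : Measure S :=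
  (∫⁻ x, f j x ∂μ)⁻¹ • μ.withDensity (f j)

/-- The predicted measures `μ_{j|j−1}`, by recursion on `j - k`. -/
noncomputable def mupredAux (κ : S → Measure S) (f : ℕ → S → ℝ≥0∞) (k : ℕ) :
    ℕ → Measure S
  | 0 => κ origin
  | n + 1 => (condMeas f (k + n) (mupredAux κ f k n)).bind κ

/-- `μ_{j|j−1}`. -/
noncomputable def mupred (κ : S → Measure S) (f : ℕ → S → ℝ≥0∞) (k j : ℕ) : Measure S :=
  mupredAux κ f k (j - k)

/-- `q_j = ∫ f_j dμ_{j|j−1}`. -/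
noncomputable def qq (κ : S → Measure S) (f : ℕ → S → ℝ≥0∞) (k j : ℕ) : ℝ≥0∞ :=
  ∫⁻ x, f j x ∂(mupred κ f k j)

/-- `μ_{j|j}`. -/
noncomputable def mucond (κ : S → Measure S) (f : ℕ → S → ℝ≥0∞) (k j : ℕ) : Measure S :=
  condMeas f j (mupred κ f k j)

/-- Non-degeneracy of a policy. -/
def NonDeg (κ : S → Measure S) (f : ℕ → S → ℝ≥0∞) (k N : ℕ) : Prop :=
  ∀ j, k ≤ j → j ≤ N → 0 < qq κ f k j

/-- The closed "no transmission" region `D̄_j`. -/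
noncomputable def Dbar (κ : S → Measure S) (c' : ℕ → ℝ) (N : ℕ) (xhat : ℕ → S)
    (j : ℕ) : Set S :=
  {x : S | ENNReal.ofReal (dS x (xhat j) ^ 2) + ∫⁻ y, JJ κ c' N xhat (j + 1) y ∂(κ x)
      ≤ ENNReal.ofReal (c' j)}

/-- The open "no transmission" region `Ḏ_j`. -/
noncomputable def Dund (κ : S → Measure S) (c' : ℕ → ℝ) (N : ℕ) (xhat : ℕ → S)
    (j : ℕ) : Set S :=
  {x : S | ENNReal.ofReal (dS x (xhat j) ^ 2) + ∫⁻ y, JJ κ c' N xhat (j + 1) y ∂(κ x)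
      < ENNReal.ofReal (c' j)}

/-- Hypothesis (H). -/
def HypH (κ : S → Measure S) (c' : ℕ → ℝ) (k N : ℕ) : Prop :=
  ∀ j, k ≤ j → j ≤ N → ∃ xhat : ℕ → S, (Dund κ c' N xhat j).Nonempty

/-- Weak convergence of measures on `(S, dS)`: tested against `dS`-continuous
bounded functions. -/
def WeakConvS (μl : ℕ → Measure S) (μ : Measure S) : Prop :=
  ∀ h : S → ℝ, DContinuous h → (∃ C : ℝ, ∀ x, |h x| ≤ C) →
    Tendsto (fun l => ∫ x, h x ∂(μl l)) atTop (𝓝 (∫ x, h x ∂μ))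

/-- Convergence of a sequence of (non-degenerate) policies to a policy. -/
def PolConv (κ : S → Measure S) (k N : ℕ) (g : ℕ → ℕ → S → ℝ≥0∞)
    (f : ℕ → S → ℝ≥0∞) : Prop :=
  ∀ j, k ≤ j → j ≤ N →
    WeakConvS (fun l => mucond κ (g l) k j) (mucond κ f k j) ∧
      Tendsto (fun l => qq κ (g l) k j) atTop (𝓝 (qq κ f k j))

--AUXSTART
namespace EstAux

def e1 (x : S) : ℝ := x.1.1
def e2 (x : S) : ℝ := x.1.2.1
def e3 (x : S) : ℝ := Real.sqrt 2 * Real.cos x.1.2.2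
def e4 (x : S) : ℝ := Real.sqrt 2 * Real.sin x.1.2.2

lemma dS_sqrt (x y : S) : dS x y = Real.sqrt ((e1 x - e1 y)^2 + (e2 x - e2 y)^2
    + (e3 x - e3 y)^2 + (e4 x - e4 y)^2) := by
  unfold dS e1 e2 e3 e4
  congr 1
  have h2' : Real.sqrt 2 ^ 2 = 2 := Real.sq_sqrt (by norm_num)
  ring_nf
  rw [h2']; ring

def EV (x : S) : EuclideanSpace ℝ (Fin 4) := WithLp.toLp 2 ![e1 x, e2 x, e3 x, e4 x]

lemma dS_eq_dist (x y : S) : dS x y = dist (EV x) (EV y) := by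
  rw [dS_sqrt, EuclideanSpace.dist_eq]
  congr 1
  rw [Fin.sum_univ_four]
  simp [EV, Real.dist_eq, sq_abs]

lemma dS_nonneg (x y : S) : 0 ≤ dS x y := Real.sqrt_nonneg _

lemma dS_comm (x y : S) : dS x y = dS y x := by
  rw [dS_eq_dist, dS_eq_dist, dist_comm]

lemma dS_triangle (x y z : S) : dS x z ≤ dS x y + dS y z := by
  rw [dS_eq_dist, dS_eq_dist, dS_eq_dist]; exact dist_triangle _ _ _

lemma dS_sq_expand (x y : S) : dS x y ^ 2 = (e1 x - e1 y)^2 + (e2 x - e2 y)^2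
    + (e3 x - e3 y)^2 + (e4 x - e4 y)^2 := by
  rw [dS_sqrt, Real.sq_sqrt (by positivity)]

lemma abs_le_of_sq_le {a b : ℝ} (hb : 0 ≤ b) (h : a^2 ≤ b^2) : |a| ≤ b := by
  have := Real.sqrt_le_sqrt h
  rwa [Real.sqrt_sq_eq_abs, Real.sqrt_sq hb] at this

instance : OpensMeasurableSpace S :=
  inferInstanceAs (OpensMeasurableSpace {x : ℝ × ℝ × ℝ | x.2.2 ∈ Set.Ico (0:ℝ) (2 * Real.pi)})

lemma dS_continuous (z : S) : Continuous fun x => dS x z := by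
  unfold dS; fun_prop

lemma dS_measurable (z : S) : Measurable fun x => dS x z := (dS_continuous z).measurable

lemma dS_lip_center (a x y : S) : |dS x a - dS y a| ≤ dS x y := by
  rw [abs_sub_le_iff]
  constructor
  · have := dS_triangle x y a; linarith
  · have := dS_triangle y x a; rw [dS_comm y x] at this; linarith

lemma e1_lip (x y : S) : |e1 x - e1 y| ≤ dS x y := by
  apply abs_le_of_sq_le (dS_nonneg x y)
  rw [dS_sq_expand]
  nlinarith [sq_nonneg (e2 x - e2 y), sq_nonneg (e3 x - e3 y), sq_nonneg (e4 x - e4 y),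
    sq_abs (e1 x - e1 y)]

lemma e2_lip (x y : S) : |e2 x - e2 y| ≤ dS x y := by
  apply abs_le_of_sq_le (dS_nonneg x y)
  rw [dS_sq_expand]
  nlinarith [sq_nonneg (e1 x - e1 y), sq_nonneg (e3 x - e3 y), sq_nonneg (e4 x - e4 y)]

lemma e3_lip (x y : S) : |e3 x - e3 y| ≤ dS x y := by
  apply abs_le_of_sq_le (dS_nonneg x y)
  rw [dS_sq_expand]
  nlinarith [sq_nonneg (e1 x - e1 y), sq_nonneg (e2 x - e2 y), sq_nonneg (e4 x - e4 y)]

lemma e4_lip (x y : S) : |e4 x - e4 y| ≤ dS x y := by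
  apply abs_le_of_sq_le (dS_nonneg x y)
  rw [dS_sq_expand]
  nlinarith [sq_nonneg (e1 x - e1 y), sq_nonneg (e2 x - e2 y), sq_nonneg (e3 x - e3 y)]

lemma e1_measurable : Measurable (e1 : S → ℝ) := by
  have : Continuous (e1 : S → ℝ) := by unfold e1; fun_prop
  exact this.measurable

lemma e2_measurable : Measurable (e2 : S → ℝ) := by
  have : Continuous (e2 : S → ℝ) := by unfold e2; fun_prop
  exact this.measurable

lemma e3_measurable : Measurable (e3 : S → ℝ) := by
  have : Continuous (e3 : S → ℝ) := by unfold e3; fun_prop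
  exact this.measurable

lemma e4_measurable : Measurable (e4 : S → ℝ) := by
  have : Continuous (e4 : S → ℝ) := by unfold e4; fun_prop
  exact this.measurable

lemma dContinuous_comp (φ : ℝ → ℝ) (hφ : Continuous φ) (g : S → ℝ)
    (hg : ∀ x y, |g x - g y| ≤ dS x y) : DContinuous fun x => φ (g x) := by
  intro x ε hε
  obtain ⟨δ, hδ, hδ'⟩ := Metric.continuous_iff.mp hφ (g x) ε hε
  refine ⟨δ, hδ, fun y hy => ?_⟩
  have h1 : |g y - g x| ≤ dS x y := by rw [dS_comm]; exact hg y x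
  have := hδ' (g y) (by rw [Real.dist_eq]; linarith)
  rwa [Real.dist_eq] at this

def clamp (R t : ℝ) : ℝ := max (-R) (min R t)

lemma clamp_continuous (R : ℝ) : Continuous (clamp R) := by
  unfold clamp; fun_prop

lemma abs_clamp_le {R : ℝ} (hR : 0 ≤ R) (t : ℝ) : |clamp R t| ≤ R := by
  rw [abs_le]; constructor
  · exact le_max_left _ _
  · exact max_le (by linarith) (min_le_left _ _)

lemma clamp_eq_self {R t : ℝ} (h1 : -R ≤ t) (h2 : t ≤ R) : clamp R t = t := by
  unfold clamp; rw [min_eq_right h2, max_eq_right h1]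

lemma clamp_err {t c d r : ℝ} (hr : 0 < r) (h1 : |t - c| ≤ d) :
    |t - clamp (|c| + r) t| ≤ d^2 / r := by
  have hd : 0 ≤ d := le_trans (abs_nonneg _) h1
  set R := |c| + r with hR
  have hR0 : 0 < R := by positivity
  rcases le_or_gt (|t|) R with h | h
  · rw [clamp_eq_self (by rw [abs_le] at h; linarith [h.1]) (abs_le.mp h).2]
    simp; positivity
  · have htc : |t| - |c| ≤ |t - c| := by
      have := abs_abs_sub_abs_le_abs_sub t c; rw [abs_le] at this; linarith [this.2]
    have hd2 : r < d := by linarith [le_trans htc h1]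
    have hcl : |t - clamp R t| = |t| - R := by
      rcases le_or_gt t 0 with ht | ht
      · have hlt : t < -R := by rw [abs_of_nonpos ht] at h; linarith
        have hc : clamp R t = -R := by
          unfold clamp; rw [min_eq_right (by linarith), max_eq_left (by linarith)]
        rw [hc, abs_of_nonpos (by linarith), abs_of_nonpos ht]; ring
      · have htR : R < t := by rw [abs_of_pos ht] at h; linarith
        have hc : clamp R t = R := by
          unfold clamp; rw [min_eq_left (by linarith), max_eq_right (by linarith)]
        rw [hc, abs_of_nonneg (by linarith), abs_of_pos ht]
    rw [hcl]
    have h3 : |t| - R ≤ d - r := by linarith [le_trans htc h1]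
    have hgoal : d - r ≤ d^2 / r := by
      rw [le_div_iff₀ hr]; nlinarith [sq_nonneg (d - r)]
    linarith

end EstAux
namespace EstAux

lemma markov_measurable {κ : S → Measure S} (hκ : IsMarkov κ) : Measurable κ :=
  Measure.measurable_of_measurable_coe _ (fun s hs => hκ.2 s hs)

lemma measurable_klint {κ : S → Measure S} (hκm : Measurable κ) {h : S → ℝ≥0∞}
    (hh : Measurable h) : Measurable fun x => ∫⁻ y, h y ∂κ x :=
  (Measure.measurable_lintegral hh).comp hκm

lemma measurable_dsq (z : S) : Measurable fun x : S => ENNReal.ofReal (dS x z ^ 2) :=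
  ((dS_measurable z).pow_const 2).ennreal_ofReal

lemma vaux_measurable {κ : S → Measure S} (hκm : Measurable κ) (c' : ℕ → ℝ) (xht : ℕ → S)
    (f : ℕ → S → ℝ≥0∞) :
    ∀ m j, (∀ i, i < m → Measurable (f (j + i))) → Measurable (Vaux κ c' xht f m j) := by
  intro m
  induction m with
  | zero => intro j _; simp only [Vaux]; exact measurable_const
  | succ m ih =>
    intro j hf
    have hfj : Measurable (f j) := by simpa using hf 0 (Nat.succ_pos m)
    have hV : Measurable (Vaux κ c' xht f m (j+1)) := by
      apply ih
      intro i hi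
      have h := hf (i+1) (by omega)
      have e : j + (i + 1) = (j + 1) + i := by omega
      rwa [e] at h
    simp only [Vaux]
    exact (hfj.mul ((measurable_dsq _).add (measurable_klint hκm hV))).add
      ((measurable_const.sub hfj).mul measurable_const)

lemma lintegral_vaux_succ {κ : S → Measure S} (hκm : Measurable κ) {c' : ℕ → ℝ} {xht : ℕ → S}
    {f : ℕ → S → ℝ≥0∞} {m j : ℕ} (μ : Measure S) (hfj : Measurable (f j))
    (hV : Measurable (Vaux κ c' xht f m (j+1))) :
    ∫⁻ x, Vaux κ c' xht f (m+1) j x ∂μ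
      = (∫⁻ x, f j x * ENNReal.ofReal (dS x (xht j) ^ 2) ∂μ
          + ENNReal.ofReal (c' j) * ∫⁻ x, (1 - f j x) ∂μ)
        + ∫⁻ y, Vaux κ c' xht f m (j+1) y ∂((μ.withDensity (f j)).bind κ) := by
  have hG : Measurable fun x => ∫⁻ y, Vaux κ c' xht f m (j+1) y ∂κ x := measurable_klint hκm hV
  have hpt : ∀ x, Vaux κ c' xht f (m+1) j x
      = (f j x * ENNReal.ofReal (dS x (xht j) ^ 2) + ENNReal.ofReal (c' j) * (1 - f j x))
        + f j x * ∫⁻ y, Vaux κ c' xht f m (j+1) y ∂κ x := by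
    intro x; simp only [Vaux]; ring
  rw [lintegral_congr hpt]
  rw [lintegral_add_right (g := fun x => f j x * ∫⁻ y, Vaux κ c' xht f m (j+1) y ∂κ x) _ (hfj.mul hG)]
  rw [lintegral_add_left (f := fun x => f j x * ENNReal.ofReal (dS x (xht j) ^ 2)) (hfj.mul (measurable_dsq _))]
  congr 1
  · congr 1
    exact lintegral_const_mul _ (measurable_const.sub hfj)
  · rw [Measure.lintegral_bind hκm.aemeasurable hV.aemeasurable, lintegral_withDensity_eq_lintegral_mul μ hfj hG]
    rfl

noncomputable def chainM (κ : S → Measure S) (f : ℕ → S → ℝ≥0∞) : ℕ → ℕ → Measure S → Measure S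
  | 0, _, μ => μ
  | (i+1), j, μ => chainM κ f i (j+1) ((μ.withDensity (f j)).bind κ)

lemma chainM_succ_right (κ : S → Measure S) (f : ℕ → S → ℝ≥0∞) :
    ∀ i j (μ : Measure S),
      chainM κ f (i+1) j μ = ((chainM κ f i j μ).withDensity (f (j+i))).bind κ := by
  intro i
  induction i with
  | zero => intro j μ; simp [chainM]
  | succ i ih =>
    intro j μ
    have h1 : chainM κ f (i+1+1) j μ
        = chainM κ f (i+1) (j+1) ((μ.withDensity (f j)).bind κ) := rfl
    rw [h1, ih (j+1)]
    have h2 : chainM κ f (i+1) j μ = chainM κ f i (j+1) ((μ.withDensity (f j)).bind κ) := rfl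
    rw [h2]
    have e : j + 1 + i = j + (i+1) := by omega
    rw [e]

lemma lintegral_vaux_sum {κ : S → Measure S} (hκm : Measurable κ) (c' : ℕ → ℝ) (xht : ℕ → S)
    (f : ℕ → S → ℝ≥0∞) :
    ∀ m j (μ : Measure S), (∀ i, i < m → Measurable (f (j + i))) →
    ∫⁻ x, Vaux κ c' xht f m j x ∂μ
      = ∑ i ∈ Finset.range m,
          (∫⁻ x, f (j+i) x * ENNReal.ofReal (dS x (xht (j+i)) ^ 2) ∂(chainM κ f i j μ)
            + ENNReal.ofReal (c' (j+i)) * ∫⁻ x, (1 - f (j+i) x) ∂(chainM κ f i j μ)) := by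
  intro m
  induction m with
  | zero => intro j μ _; simp [Vaux]
  | succ m ih =>
    intro j μ hf
    have hshift : ∀ i, i < m → Measurable (f ((j+1) + i)) := by
      intro i hi
      have h := hf (i+1) (by omega)
      have e : j + (i + 1) = (j + 1) + i := by omega
      rwa [e] at h
    have hfj : Measurable (f j) := by simpa using hf 0 (Nat.succ_pos m)
    have hV : Measurable (Vaux κ c' xht f m (j+1)) := vaux_measurable hκm c' xht f m (j+1) hshift
    rw [lintegral_vaux_succ hκm μ hfj hV, ih (j+1) _ hshift, Finset.sum_range_succ']
    rw [add_comm]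
    congr 1
    apply Finset.sum_congr rfl
    intro i _
    have e : j + (i + 1) = (j + 1) + i := by omega
    have h2 : chainM κ f (i+1) j μ = chainM κ f i (j+1) ((μ.withDensity (f j)).bind κ) := rfl
    rw [e, h2]

end EstAux

namespace EstAux

lemma bind_smul_meas {κ : S → Measure S} (hκm : Measurable κ) (c : ℝ≥0∞) (μ : Measure S) :
    (c • μ).bind κ = c • μ.bind κ := by
  ext s hs
  rw [Measure.bind_apply hs hκm.aemeasurable, Measure.smul_apply, smul_eq_mul, Measure.bind_apply hs hκm.aemeasurable,
    lintegral_smul_measure, smul_eq_mul]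

lemma isProb_bind {κ : S → Measure S} (hκm : Measurable κ)
    (hκp : ∀ x, IsProbabilityMeasure (κ x)) (μ : Measure S) (hμ : IsProbabilityMeasure μ) :
    IsProbabilityMeasure (μ.bind κ) := by
  constructor
  rw [Measure.bind_apply MeasurableSet.univ hκm.aemeasurable]
  simp only [measure_univ]
  rw [lintegral_one, hμ.measure_univ]

lemma condMeas_isProb {f : ℕ → S → ℝ≥0∞} {j : ℕ} {μ : Measure S} (hfm : Measurable (f j))
    (hq0 : (∫⁻ x, f j x ∂μ) ≠ 0) (hqt : (∫⁻ x, f j x ∂μ) ≠ ∞) :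
    IsProbabilityMeasure (condMeas f j μ) := by
  constructor
  unfold condMeas
  rw [Measure.smul_apply, withDensity_apply _ MeasurableSet.univ, smul_eq_mul,
    setLIntegral_univ]
  exact ENNReal.inv_mul_cancel hq0 hqt

lemma mupred_eq (κ : S → Measure S) (f : ℕ → S → ℝ≥0∞) (k n : ℕ) :
    mupred κ f k (k+n) = mupredAux κ f k n := by
  unfold mupred
  rw [Nat.add_sub_cancel_left]

lemma qq_eq (κ : S → Measure S) (f : ℕ → S → ℝ≥0∞) (k n : ℕ) :
    qq κ f k (k+n) = ∫⁻ x, f (k+n) x ∂(mupredAux κ f k n) := by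
  unfold qq
  rw [mupred_eq]

lemma chain_eq_smul_mupred {κ : S → Measure S} (hκm : Measurable κ)
    (hκp : ∀ x, IsProbabilityMeasure (κ x)) (f : ℕ → S → ℝ≥0∞) (k : ℕ) :
    ∀ n, (∀ m, m < n → Measurable (f (k+m)) ∧ (∀ x, f (k+m) x ≤ 1) ∧ qq κ f k (k+m) ≠ 0) →
      IsProbabilityMeasure (mupredAux κ f k n) ∧
      chainM κ f n k (κ origin)
        = (∏ m ∈ Finset.range n, qq κ f k (k+m)) • mupredAux κ f k n := by
  intro n
  induction n with
  | zero =>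
    intro _
    refine ⟨hκp origin, ?_⟩
    simp [chainM, mupredAux]
  | succ n ih =>
    intro h
    obtain ⟨hp, hc⟩ := ih (fun m hm => h m (by omega))
    obtain ⟨hfm, hf1, hq0⟩ := h n (by omega)
    have hq0' : (∫⁻ x, f (k+n) x ∂(mupredAux κ f k n)) ≠ 0 := by
      rw [← qq_eq]; exact hq0
    have hqle : (∫⁻ x, f (k+n) x ∂(mupredAux κ f k n)) ≤ 1 := by
      calc ∫⁻ x, f (k+n) x ∂(mupredAux κ f k n) ≤ ∫⁻ _, 1 ∂(mupredAux κ f k n) :=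
            lintegral_mono hf1
        _ = 1 := by rw [lintegral_one, hp.measure_univ]
    have hqt : (∫⁻ x, f (k+n) x ∂(mupredAux κ f k n)) ≠ ∞ :=
      (hqle.trans_lt ENNReal.one_lt_top).ne
    have hwd : (mupredAux κ f k n).withDensity (f (k+n))
        = qq κ f k (k+n) • condMeas f (k+n) (mupredAux κ f k n) := by
      rw [qq_eq]
      unfold condMeas
      rw [smul_smul, ENNReal.mul_inv_cancel hq0' hqt, one_smul]
    have hcp : IsProbabilityMeasure (condMeas f (k+n) (mupredAux κ f k n)) :=
      condMeas_isProb hfm hq0' hqt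
    constructor
    · exact isProb_bind hκm hκp _ hcp
    · have hstep : chainM κ f (n+1) k (κ origin)
          = ((chainM κ f n k (κ origin)).withDensity (f (k+n))).bind κ :=
        chainM_succ_right κ f n k (κ origin)
      rw [hstep, hc, withDensity_smul_measure, hwd, smul_smul, bind_smul_meas hκm,
        Finset.prod_range_succ]
      rfl

lemma lintegral_mucond {f : ℕ → S → ℝ≥0∞} {k n : ℕ} {κ : S → Measure S} {g : S → ℝ≥0∞}
    (hfm : Measurable (f (k+n))) (hg : Measurable g)
    (hq0 : qq κ f k (k+n) ≠ 0) (hqt : qq κ f k (k+n) ≠ ∞) :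
    qq κ f k (k+n) * ∫⁻ x, g x ∂(mucond κ f k (k+n))
      = ∫⁻ x, f (k+n) x * g x ∂(mupredAux κ f k n) := by
  unfold mucond condMeas
  rw [lintegral_smul_measure, smul_eq_mul, lintegral_withDensity_eq_lintegral_mul _ hfm hg, mupred_eq,
    ← qq_eq, ← mul_assoc, ENNReal.mul_inv_cancel hq0 hqt, one_mul]
  rfl

lemma cost_eq_sum {κ : S → Measure S} (hκm : Measurable κ) (c' : ℕ → ℝ) (k N : ℕ)
    (xhat : ℕ → S) (f : ℕ → S → ℝ≥0∞) (hfm : ∀ j, k ≤ j → j ≤ N → Measurable (f j)) :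
    Cost κ c' k N xhat f = ∑ i ∈ Finset.range (N+1-k),
      (∫⁻ x, f (k+i) x * ENNReal.ofReal (dS x (xhat (k+i)) ^ 2) ∂(chainM κ f i k (κ origin))
        + ENNReal.ofReal (c' (k+i)) * ∫⁻ x, (1 - f (k+i) x) ∂(chainM κ f i k (κ origin))) := by
  unfold Cost VV
  exact lintegral_vaux_sum hκm c' xhat f (N+1-k) k (κ origin)
    (fun i hi => hfm (k+i) (by omega) (by omega))

lemma zero_policy (k N : ℕ) : IsPolicy k N (fun _ _ => (0:ℝ≥0∞)) :=
  fun _ _ _ => ⟨measurable_const, fun _ => zero_le_one⟩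

lemma cost_zero_policy {κ : S → Measure S} (hκp : ∀ x, IsProbabilityMeasure (κ x))
    (c' : ℕ → ℝ) (k N : ℕ) (xhat : ℕ → S) (hkN : k ≤ N) :
    Cost κ c' k N xhat (fun _ _ => 0) = ENNReal.ofReal (c' k) := by
  unfold Cost VV
  have hNk : N + 1 - k = (N - k) + 1 := by omega
  rw [hNk]
  have hv : ∀ x : S, Vaux κ c' xhat (fun _ _ => 0) ((N-k)+1) k x = ENNReal.ofReal (c' k) := by
    intro x; simp [Vaux]
  rw [lintegral_congr hv, lintegral_const, (hκp origin).measure_univ, mul_one]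

end EstAux

namespace EstAux

lemma integrable_of_lintegral_lt {ν : Measure S} {h : S → ℝ} (hm : Measurable h)
    (h0 : ∀ x, 0 ≤ h x) (hfin : ∫⁻ x, ENNReal.ofReal (h x) ∂ν < ∞) : Integrable h ν := by
  refine ⟨hm.aestronglyMeasurable, ?_⟩
  rw [hasFiniteIntegral_iff_ofReal (Eventually.of_forall h0)]
  exact hfin

lemma integral_eq_toReal_lintegral {ν : Measure S} {h : S → ℝ} (hm : Measurable h)
    (h0 : ∀ x, 0 ≤ h x) :
    ∫ x, h x ∂ν = (∫⁻ x, ENNReal.ofReal (h x) ∂ν).toReal := by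
  rw [integral_eq_lintegral_of_nonneg_ae (Eventually.of_forall h0) hm.aestronglyMeasurable]

lemma measurable_dsq_real (z : S) : Measurable fun x : S => dS x z ^ 2 :=
  (dS_measurable z).pow_const 2

lemma dsq_tri (a z x : S) : dS x z ^ 2 ≤ 2 * dS x a ^ 2 + 2 * dS a z ^ 2 := by
  have h1 : dS x z ≤ dS x a + dS a z := dS_triangle x a z
  have h0 := dS_nonneg x z
  have h2 : dS x z ^ 2 ≤ (dS x a + dS a z) ^ 2 := by nlinarith
  nlinarith [sq_nonneg (dS x a - dS a z)]

lemma ofReal_two : ENNReal.ofReal (2:ℝ) = 2 := by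
  rw [show (2:ℝ) = ((2:ℕ):ℝ) by norm_num, ENNReal.ofReal_natCast]
  norm_num

lemma lint_dsq_le {ν : Measure S} (a z : S) :
    ∫⁻ x, ENNReal.ofReal (dS x z ^ 2) ∂ν
      ≤ 2 * ∫⁻ x, ENNReal.ofReal (dS x a ^ 2) ∂ν + ENNReal.ofReal (2 * dS a z ^ 2) * ν Set.univ := by
  have hpt : ∀ x, ENNReal.ofReal (dS x z ^ 2)
      ≤ 2 * ENNReal.ofReal (dS x a ^ 2) + ENNReal.ofReal (2 * dS a z ^ 2) := by
    intro x
    calc ENNReal.ofReal (dS x z ^ 2)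
        ≤ ENNReal.ofReal (2 * dS x a ^ 2 + 2 * dS a z ^ 2) :=
          ENNReal.ofReal_le_ofReal (dsq_tri a z x)
      _ = ENNReal.ofReal (2 * dS x a ^ 2) + ENNReal.ofReal (2 * dS a z ^ 2) :=
          ENNReal.ofReal_add (by positivity) (by positivity)
      _ = 2 * ENNReal.ofReal (dS x a ^ 2) + ENNReal.ofReal (2 * dS a z ^ 2) := by
          rw [ENNReal.ofReal_mul (by norm_num : (0:ℝ) ≤ 2), ofReal_two]
  calc ∫⁻ x, ENNReal.ofReal (dS x z ^ 2) ∂ν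
      ≤ ∫⁻ x, 2 * ENNReal.ofReal (dS x a ^ 2) + ENNReal.ofReal (2 * dS a z ^ 2) ∂ν :=
        lintegral_mono hpt
    _ = 2 * ∫⁻ x, ENNReal.ofReal (dS x a ^ 2) ∂ν + ENNReal.ofReal (2 * dS a z ^ 2) * ν Set.univ := by
        rw [lintegral_add_right _ measurable_const, lintegral_const,
          lintegral_const_mul _ (measurable_dsq a)]

lemma trunc_err {ν : Measure S} (hνp : IsProbabilityMeasure ν) {a : S} {B2 : ℝ} (hB2 : 0 ≤ B2)
    (hsec : ∫⁻ x, ENNReal.ofReal (dS x a ^ 2) ∂ν ≤ ENNReal.ofReal B2)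
    (g : S → ℝ) (hgm : Measurable g) (hLip : ∀ x y, |g x - g y| ≤ dS x y)
    (r : ℝ) (hr : 0 < r) :
    |∫ x, g x ∂ν - ∫ x, clamp (|g a| + r) (g x) ∂ν| ≤ B2 / r := by
  have hdint : Integrable (fun x => dS x a ^ 2) ν :=
    integrable_of_lintegral_lt (measurable_dsq_real a) (fun x => by positivity)
      (hsec.trans_lt ENNReal.ofReal_lt_top)
  have hgb : ∀ x, ‖g x‖ ≤ (|g a| + 1) + dS x a ^ 2 := by
    intro x
    have h1 : |g x - g a| ≤ dS x a := hLip x a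
    have h2 : dS x a ≤ 1 + dS x a ^ 2 := by nlinarith [sq_nonneg (dS x a - 1)]
    have := abs_sub_abs_le_abs_sub (g x) (g a)
    rw [Real.norm_eq_abs]
    linarith
  have hgint : Integrable g ν := by
    refine Integrable.mono' ((integrable_const (|g a| + 1)).add hdint)
      hgm.aestronglyMeasurable (Eventually.of_forall hgb)
  have hclm : Measurable fun x => clamp (|g a| + r) (g x) :=
    (clamp_continuous _).measurable.comp hgm
  have htint : Integrable (fun x => clamp (|g a| + r) (g x)) ν := by
    refine Integrable.mono' (integrable_const (|g a| + r)) hclm.aestronglyMeasurable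
      (Eventually.of_forall fun x => ?_)
    rw [Real.norm_eq_abs]
    exact abs_clamp_le (by positivity) _
  have hsub : Integrable (fun x => g x - clamp (|g a| + r) (g x)) ν := hgint.sub htint
  rw [← integral_sub hgint htint]
  have habs : |∫ x, (g x - clamp (|g a| + r) (g x)) ∂ν|
      ≤ ∫ x, |g x - clamp (|g a| + r) (g x)| ∂ν := by
    simpa [Real.norm_eq_abs] using
      norm_integral_le_integral_norm (fun x => g x - clamp (|g a| + r) (g x)) (μ := ν)
  refine le_trans habs ?_
  have hptb : ∀ x, |g x - clamp (|g a| + r) (g x)| ≤ dS x a ^ 2 / r := by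
    intro x
    exact clamp_err hr (hLip x a)
  calc ∫ x, |g x - clamp (|g a| + r) (g x)| ∂ν
      ≤ ∫ x, dS x a ^ 2 / r ∂ν := integral_mono hsub.abs (hdint.div_const r) hptb
    _ = (∫ x, dS x a ^ 2 ∂ν) / r := integral_div r _
    _ ≤ B2 / r := by
        have heq : ∫ x, dS x a ^ 2 ∂ν = (∫⁻ x, ENNReal.ofReal (dS x a ^ 2) ∂ν).toReal :=
          integral_eq_toReal_lintegral (measurable_dsq_real a) (fun x => by positivity)
        have hle : ∫ x, dS x a ^ 2 ∂ν ≤ B2 := by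
          rw [heq]; exact ENNReal.toReal_le_of_le_ofReal hB2 hsec
        gcongr

end EstAux

namespace EstAux

lemma moment_conv {μseq : ℕ → Measure S} {μ : Measure S}
    (hw : WeakConvS μseq μ)
    (hseqp : ∀ᶠ l in atTop, IsProbabilityMeasure (μseq l)) (hμp : IsProbabilityMeasure μ)
    (a : S) {B2 : ℝ} (hB2 : 0 ≤ B2)
    (hsec : ∀ᶠ l in atTop, ∫⁻ x, ENNReal.ofReal (dS x a ^ 2) ∂(μseq l) ≤ ENNReal.ofReal B2)
    (hμsec : ∫⁻ x, ENNReal.ofReal (dS x a ^ 2) ∂μ ≤ ENNReal.ofReal B2)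
    (g : S → ℝ) (hgm : Measurable g) (hLip : ∀ x y, |g x - g y| ≤ dS x y) :
    Tendsto (fun l => ∫ x, g x ∂(μseq l)) atTop (𝓝 (∫ x, g x ∂μ)) := by
  rw [Metric.tendsto_nhds]
  intro ε hε
  set r : ℝ := 3 * (B2 + 1) / ε with hrdef
  have hr : 0 < r := by positivity
  have herr : B2 / r ≤ ε / 3 := by
    have h1 : B2 / r = B2 * ε / (3 * (B2 + 1)) := by
      rw [hrdef]; field_simp
    rw [h1, div_le_div_iff₀ (by positivity) (by norm_num)]
    nlinarith [hε.le, hB2]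
  set R := |g a| + r with hRdef
  have hDC : DContinuous fun x => clamp R (g x) :=
    dContinuous_comp (clamp R) (clamp_continuous R) g hLip
  have hbd : ∃ Cb : ℝ, ∀ x, |clamp R (g x)| ≤ Cb :=
    ⟨R, fun x => abs_clamp_le (by positivity) _⟩
  have htrunc := hw _ hDC hbd
  rw [Metric.tendsto_nhds] at htrunc
  filter_upwards [htrunc (ε/3) (by positivity), hsec, hseqp] with l h1 h2 h3
  have e1 := trunc_err h3 hB2 h2 g hgm hLip r hr
  have e2 := trunc_err hμp hB2 hμsec g hgm hLip r hr
  rw [Real.dist_eq] at h1 ⊢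
  have tri : |∫ x, g x ∂μseq l - ∫ x, g x ∂μ|
      ≤ |∫ x, g x ∂μseq l - ∫ x, clamp R (g x) ∂μseq l|
        + |∫ x, clamp R (g x) ∂μseq l - ∫ x, clamp R (g x) ∂μ|
        + |∫ x, clamp R (g x) ∂μ - ∫ x, g x ∂μ| := by
    have t1 := abs_sub_le (∫ x, g x ∂μseq l) (∫ x, clamp R (g x) ∂μseq l) (∫ x, g x ∂μ)
    have t2 := abs_sub_le (∫ x, clamp R (g x) ∂μseq l) (∫ x, clamp R (g x) ∂μ) (∫ x, g x ∂μ)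
    linarith
  have e2' : |∫ x, clamp R (g x) ∂μ - ∫ x, g x ∂μ| ≤ B2 / r := by
    rw [abs_sub_comm]; exact e2
  have : |∫ x, g x ∂μseq l - ∫ x, g x ∂μ| < ε/3 + ε/3 + ε/3 := by linarith
  linarith [this]

end EstAux

namespace EstAux

def Pq (w : S) : ℝ := e1 w^2 + e2 w^2 + e3 w^2 + e4 w^2

def Lin (ν : Measure S) (w : S) : ℝ :=
  Pq w - 2 * (e1 w * ∫ x, e1 x ∂ν + e2 w * ∫ x, e2 x ∂ν
    + e3 w * ∫ x, e3 x ∂ν + e4 w * ∫ x, e4 x ∂ν)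

lemma integrable_lip_pair {ν : Measure S} (hνp : IsProbabilityMeasure ν) {a : S}
    (hdint : Integrable (fun x => dS x a ^ 2) ν)
    (g : S → ℝ) (hgm : Measurable g) (hLip : ∀ x y, |g x - g y| ≤ dS x y) :
    Integrable g ν ∧ Integrable (fun x => g x ^ 2) ν := by
  haveI : IsFiniteMeasure ν := ⟨by rw [hνp.measure_univ]; exact ENNReal.one_lt_top⟩
  constructor
  · refine Integrable.mono' ((integrable_const (|g a| + 1)).add hdint)
      hgm.aestronglyMeasurable (Eventually.of_forall fun x => ?_)
    have h1 := hLip x a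
    have h2 : dS x a ≤ 1 + dS x a ^ 2 := by nlinarith [sq_nonneg (dS x a - 1)]
    have h3 := abs_sub_abs_le_abs_sub (g x) (g a)
    rw [Real.norm_eq_abs]
    simp only [Pi.add_apply]
    have h4 := abs_abs_sub_abs_le_abs_sub (g x) (g a)
    rw [abs_le] at h4
    linarith [h4.2, abs_nonneg (g x)]
  · refine Integrable.mono' ((integrable_const (2 * g a ^ 2)).add (hdint.const_mul 2))
      (hgm.pow_const 2).aestronglyMeasurable (Eventually.of_forall fun x => ?_)
    have h1 := hLip x a
    have h5 : (g x - g a)^2 ≤ dS x a ^ 2 := by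
      have := pow_le_pow_left₀ (abs_nonneg (g x - g a)) h1 2
      rwa [sq_abs] at this
    rw [Real.norm_eq_abs, abs_of_nonneg (sq_nonneg (g x))]
    simp only [Pi.add_apply]
    nlinarith [sq_nonneg (g x - 2 * g a)]

lemma expand_integral {ν : Measure S} (hνp : IsProbabilityMeasure ν) {a : S}
    (hsec : ∫⁻ x, ENNReal.ofReal (dS x a ^ 2) ∂ν < ∞) (w : S) :
    ∫ x, dS x w ^ 2 ∂ν = (∫ x, Pq x ∂ν) + Lin ν w := by
  haveI : IsFiniteMeasure ν := ⟨by rw [hνp.measure_univ]; exact ENNReal.one_lt_top⟩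
  have hdint : Integrable (fun x => dS x a ^ 2) ν :=
    integrable_of_lintegral_lt (measurable_dsq_real a) (fun x => by positivity) hsec
  obtain ⟨h1i, h1sq⟩ := integrable_lip_pair hνp hdint e1 e1_measurable e1_lip
  obtain ⟨h2i, h2sq⟩ := integrable_lip_pair hνp hdint e2 e2_measurable e2_lip
  obtain ⟨h3i, h3sq⟩ := integrable_lip_pair hνp hdint e3 e3_measurable e3_lip
  obtain ⟨h4i, h4sq⟩ := integrable_lip_pair hνp hdint e4 e4_measurable e4_lip
  have hPq : Integrable (fun x => e1 x^2 + e2 x^2 + e3 x^2 + e4 x^2) ν :=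
    ((h1sq.add h2sq).add h3sq).add h4sq
  have hpt : ∀ x, dS x w ^ 2 = (e1 x^2 + e2 x^2 + e3 x^2 + e4 x^2)
      + (Pq w + ((-2*e1 w) * e1 x + ((-2*e2 w) * e2 x
        + ((-2*e3 w) * e3 x + (-2*e4 w) * e4 x)))) := by
    intro x; rw [dS_sq_expand]; unfold Pq; ring
  have hL4 : Integrable (fun x => (-2*e4 w) * e4 x) ν := h4i.const_mul _
  have hL3 : Integrable (fun x => (-2*e3 w) * e3 x + (-2*e4 w) * e4 x) ν :=
    (h3i.const_mul _).add hL4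
  have hL2 : Integrable (fun x => (-2*e2 w) * e2 x
      + ((-2*e3 w) * e3 x + (-2*e4 w) * e4 x)) ν := (h2i.const_mul _).add hL3
  have hL1 : Integrable (fun x => (-2*e1 w) * e1 x + ((-2*e2 w) * e2 x
      + ((-2*e3 w) * e3 x + (-2*e4 w) * e4 x))) ν := (h1i.const_mul _).add hL2
  have hC1 : Integrable (fun x => Pq w + ((-2*e1 w) * e1 x + ((-2*e2 w) * e2 x
      + ((-2*e3 w) * e3 x + (-2*e4 w) * e4 x)))) ν := (integrable_const _).add hL1
  rw [integral_congr_ae (Eventually.of_forall hpt)]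
  rw [integral_add hPq hC1, integral_add (integrable_const _) hL1,
    integral_add (h1i.const_mul _) hL2, integral_add (h2i.const_mul _) hL3,
    integral_add (h3i.const_mul _) hL4,
    integral_const_mul, integral_const_mul, integral_const_mul, integral_const_mul,
    integral_const]
  unfold Lin Pq
  simp only [hνp.measure_univ, ENNReal.toReal_one, one_smul, probReal_univ]
  ring

end EstAux

namespace EstAux

lemma key_limit (μseq : ℕ → Measure S) (μ : Measure S)
    (hμp : IsProbabilityMeasure μ)
    (hseqp : ∀ᶠ l in atTop, IsProbabilityMeasure (μseq l))
    (hw : WeakConvS μseq μ)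
    (a : S) (aseq : ℕ → S) (ha : Tendsto (fun l => dS (aseq l) a) atTop (𝓝 0))
    (C : ℝ)
    (hC : ∀ᶠ l in atTop, ∫⁻ x, ENNReal.ofReal (dS x (aseq l) ^ 2) ∂(μseq l) ≤ ENNReal.ofReal C)
    (hmin : ∀ z : S, ∀ᶠ l in atTop,
      ∫⁻ x, ENNReal.ofReal (dS x (aseq l) ^ 2) ∂(μseq l)
        ≤ ∫⁻ x, ENNReal.ofReal (dS x z ^ 2) ∂(μseq l))
    (z : S) :
    ∫⁻ x, ENNReal.ofReal (dS x a ^ 2) ∂μ ≤ ∫⁻ x, ENNReal.ofReal (dS x z ^ 2) ∂μ := by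
  set B2 : ℝ := 2 * max C 0 + 2 with hB2def
  have hB2 : 0 ≤ B2 := by positivity
  have ha1 : ∀ᶠ l in atTop, dS (aseq l) a ≤ 1 := by
    have h := Metric.tendsto_nhds.mp ha 1 one_pos
    filter_upwards [h] with l hl
    rw [Real.dist_eq, sub_zero] at hl
    exact le_of_lt (lt_of_abs_lt hl)
  have hsA : ∀ᶠ l in atTop, ∫⁻ x, ENNReal.ofReal (dS x a ^ 2) ∂(μseq l) ≤ ENNReal.ofReal B2 := by
    filter_upwards [hC, ha1, hseqp] with l h1 h2 h3
    have hA : ∫⁻ x, ENNReal.ofReal (dS x (aseq l) ^ 2) ∂(μseq l) ≤ ENNReal.ofReal (max C 0) :=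
      h1.trans (ENNReal.ofReal_le_ofReal (le_max_left _ _))
    have hB : ENNReal.ofReal (2 * dS (aseq l) a ^ 2) ≤ ENNReal.ofReal 2 :=
      ENNReal.ofReal_le_ofReal (by nlinarith [dS_nonneg (aseq l) a])
    calc ∫⁻ x, ENNReal.ofReal (dS x a ^ 2) ∂(μseq l)
        ≤ 2 * ∫⁻ x, ENNReal.ofReal (dS x (aseq l) ^ 2) ∂(μseq l)
            + ENNReal.ofReal (2 * dS (aseq l) a ^ 2) * (μseq l) Set.univ :=
          lint_dsq_le (aseq l) a
      _ ≤ 2 * ENNReal.ofReal (max C 0) + ENNReal.ofReal 2 * 1 := by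
          rw [h3.measure_univ]
          exact add_le_add (mul_le_mul_right hA 2) (mul_le_mul_left hB 1)
      _ = ENNReal.ofReal B2 := by
          rw [mul_one, ← ofReal_two, ← ENNReal.ofReal_mul (by norm_num : (0:ℝ) ≤ 2),
            ← ENNReal.ofReal_add (by positivity) (by norm_num)]
  have hμsec : ∫⁻ x, ENNReal.ofReal (dS x a ^ 2) ∂μ ≤ ENNReal.ofReal B2 := by
    have hmeas : ∀ n : ℕ, Measurable fun x : S => ENNReal.ofReal (min (dS x a ^ 2) n) :=
      fun n => ((measurable_dsq_real a).min measurable_const).ennreal_ofReal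
    have hub : ∀ n : ℕ, ∫⁻ x, ENNReal.ofReal (min (dS x a ^ 2) n) ∂μ ≤ ENNReal.ofReal B2 := by
      intro n
      have hDC : DContinuous fun x => min (dS x a ^ 2) (n:ℝ) :=
        dContinuous_comp (fun t => min (t ^ 2) (n:ℝ)) (by fun_prop) (fun x => dS x a)
          (dS_lip_center a)
      have hbd : ∃ Cb : ℝ, ∀ x, |min (dS x a ^ 2) (n:ℝ)| ≤ Cb := by
        refine ⟨n, fun x => ?_⟩
        rw [abs_of_nonneg (le_min (by positivity) (Nat.cast_nonneg n))]
        exact min_le_right _ _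
      have htend := hw _ hDC hbd
      have hev : ∀ᶠ l in atTop, ∫ x, min (dS x a ^ 2) (n:ℝ) ∂(μseq l) ≤ B2 := by
        filter_upwards [hsA] with l h1
        rw [integral_eq_toReal_lintegral ((measurable_dsq_real a).min measurable_const)
          (fun x => le_min (by positivity) (Nat.cast_nonneg n))]
        apply ENNReal.toReal_le_of_le_ofReal hB2
        exact le_trans (lintegral_mono fun x => ENNReal.ofReal_le_ofReal (min_le_left _ _)) h1
      have hlim : ∫ x, min (dS x a ^ 2) (n:ℝ) ∂μ ≤ B2 := le_of_tendsto htend hev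
      have hfin : ∫⁻ x, ENNReal.ofReal (min (dS x a ^ 2) n) ∂μ ≠ ∞ := by
        refine ne_of_lt (lt_of_le_of_lt
          (lintegral_mono fun x => ENNReal.ofReal_le_ofReal (min_le_right _ _)) ?_)
        rw [lintegral_const, hμp.measure_univ, mul_one]
        exact ENNReal.ofReal_lt_top
      rw [← ENNReal.ofReal_toReal hfin]
      apply ENNReal.ofReal_le_ofReal
      rw [← integral_eq_toReal_lintegral ((measurable_dsq_real a).min measurable_const)
        (fun x => le_min (by positivity) (Nat.cast_nonneg n))]
      exact hlim
    have hmono2 : Monotone fun (n:ℕ) => fun x : S => ENNReal.ofReal (min (dS x a ^ 2) n) := by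
      intro n m hnm
      intro x
      exact ENNReal.ofReal_le_ofReal (min_le_min le_rfl (Nat.cast_le.2 hnm))
    have hsup : ∫⁻ x, ENNReal.ofReal (dS x a ^ 2) ∂μ
        = ⨆ n : ℕ, ∫⁻ x, ENNReal.ofReal (min (dS x a ^ 2) n) ∂μ := by
      rw [← lintegral_iSup hmeas hmono2]
      apply lintegral_congr
      intro x
      apply le_antisymm
      · refine le_iSup_of_le ⌈dS x a ^ 2⌉₊ ?_
        rw [min_eq_left (Nat.le_ceil _)]
      · exact iSup_le fun n => ENNReal.ofReal_le_ofReal (min_le_left _ _)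
    rw [hsup]
    exact iSup_le hub
  have hμfinA : ∫⁻ x, ENNReal.ofReal (dS x a ^ 2) ∂μ < ∞ :=
    lt_of_le_of_lt hμsec ENNReal.ofReal_lt_top
  have hfinZ : ∀ (ν : Measure S), IsProbabilityMeasure ν →
      ∫⁻ x, ENNReal.ofReal (dS x a ^ 2) ∂ν ≤ ENNReal.ofReal B2 →
      ∀ w : S, ∫⁻ x, ENNReal.ofReal (dS x w ^ 2) ∂ν < ∞ := by
    intro ν hp hs w
    refine lt_of_le_of_lt (lint_dsq_le a w) ?_
    rw [hp.measure_univ, mul_one]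
    exact ENNReal.add_lt_top.2 ⟨ENNReal.mul_lt_top (ENNReal.ofNat_ne_top (n := 2)).lt_top
      (lt_of_le_of_lt hs ENNReal.ofReal_lt_top), ENNReal.ofReal_lt_top⟩
  have hm1 := moment_conv hw hseqp hμp a hB2 hsA hμsec e1 e1_measurable e1_lip
  have hm2 := moment_conv hw hseqp hμp a hB2 hsA hμsec e2 e2_measurable e2_lip
  have hm3 := moment_conv hw hseqp hμp a hB2 hsA hμsec e3 e3_measurable e3_lip
  have hm4 := moment_conv hw hseqp hμp a hB2 hsA hμsec e4 e4_measurable e4_lip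
  have haei : ∀ (g : S → ℝ), (∀ x y, |g x - g y| ≤ dS x y) →
      Tendsto (fun l => g (aseq l)) atTop (𝓝 (g a)) := by
    intro g hLip
    have h0 : Tendsto (fun l => g (aseq l) - g a) atTop (𝓝 0) :=
      squeeze_zero_norm (fun l => hLip (aseq l) a) ha
    have h1 := h0.add_const (g a)
    simpa using h1
  have ha1t := haei e1 e1_lip
  have ha2t := haei e2 e2_lip
  have ha3t := haei e3 e3_lip
  have ha4t := haei e4 e4_lip
  have hΔev : ∀ᶠ l in atTop,
      Lin (μseq l) z - Lin (μseq l) (aseq l)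
        = ∫ x, dS x z ^ 2 ∂(μseq l) - ∫ x, dS x (aseq l) ^ 2 ∂(μseq l) := by
    filter_upwards [hseqp, hsA] with l hp hs
    rw [expand_integral hp (hs.trans_lt ENNReal.ofReal_lt_top) z,
      expand_integral hp (hs.trans_lt ENNReal.ofReal_lt_top) (aseq l)]
    ring
  have hΔpos : ∀ᶠ l in atTop, 0 ≤ Lin (μseq l) z - Lin (μseq l) (aseq l) := by
    filter_upwards [hΔev, hmin z, hseqp, hsA] with l he hm hp hs
    rw [he]
    have hfz : ∫⁻ x, ENNReal.ofReal (dS x z ^ 2) ∂(μseq l) < ∞ := hfinZ _ hp hs z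
    have h1 : (∫⁻ x, ENNReal.ofReal (dS x (aseq l) ^ 2) ∂(μseq l)).toReal
        ≤ (∫⁻ x, ENNReal.ofReal (dS x z ^ 2) ∂(μseq l)).toReal :=
      ENNReal.toReal_mono hfz.ne hm
    rw [integral_eq_toReal_lintegral (measurable_dsq_real z) (fun x => by positivity),
      integral_eq_toReal_lintegral (measurable_dsq_real (aseq l)) (fun x => by positivity)]
    linarith
  have hLz : Tendsto (fun l => Lin (μseq l) z) atTop (𝓝 (Lin μ z)) := by
    unfold Lin
    exact tendsto_const_nhds.sub
      (((((tendsto_const_nhds.mul hm1).add (tendsto_const_nhds.mul hm2)).add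
        (tendsto_const_nhds.mul hm3)).add (tendsto_const_nhds.mul hm4)).const_mul 2)
  have hLa : Tendsto (fun l => Lin (μseq l) (aseq l)) atTop (𝓝 (Lin μ a)) := by
    unfold Lin Pq
    exact ((((ha1t.pow 2).add (ha2t.pow 2)).add (ha3t.pow 2)).add (ha4t.pow 2)).sub
      (((((ha1t.mul hm1).add (ha2t.mul hm2)).add (ha3t.mul hm3)).add
        (ha4t.mul hm4)).const_mul 2)
  have hlim0 : 0 ≤ Lin μ z - Lin μ a := ge_of_tendsto (hLz.sub hLa) hΔpos
  have hexpz := expand_integral hμp hμfinA z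
  have hexpa := expand_integral hμp hμfinA a
  have hreal : ∫ x, dS x a ^ 2 ∂μ ≤ ∫ x, dS x z ^ 2 ∂μ := by
    rw [hexpz, hexpa]
    linarith
  have hμfinZ : ∫⁻ x, ENNReal.ofReal (dS x z ^ 2) ∂μ < ∞ := hfinZ _ hμp hμsec z
  rw [← ENNReal.ofReal_toReal hμfinA.ne, ← ENNReal.ofReal_toReal hμfinZ.ne]
  apply ENNReal.ofReal_le_ofReal
  rw [← integral_eq_toReal_lintegral (measurable_dsq_real a) (fun x => by positivity),
    ← integral_eq_toReal_lintegral (measurable_dsq_real z) (fun x => by positivity)]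
  exact hreal

end EstAux

namespace EstAux

lemma term_eq {κ : S → Measure S} (hκm : Measurable κ) (hκp : ∀ x, IsProbabilityMeasure (κ x))
    {f : ℕ → S → ℝ≥0∞} {k N : ℕ} (hfpol : IsPolicy k N f)
    (hq : ∀ j, k ≤ j → j ≤ N → qq κ f k j ≠ 0)
    {n : ℕ} (hn : k + n ≤ N) (z : S) :
    (∫⁻ x, f (k+n) x * ENNReal.ofReal (dS x z ^ 2) ∂(chainM κ f n k (κ origin))
      = ((∏ m ∈ Finset.range n, qq κ f k (k+m)) * qq κ f k (k+n))
          * ∫⁻ x, ENNReal.ofReal (dS x z ^ 2) ∂(mucond κ f k (k+n)))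
    ∧ IsProbabilityMeasure (mucond κ f k (k+n))
    ∧ ((∏ m ∈ Finset.range n, qq κ f k (k+m)) * qq κ f k (k+n)) ≠ 0
    ∧ ((∏ m ∈ Finset.range n, qq κ f k (k+m)) * qq κ f k (k+n)) ≠ ∞
    ∧ qq κ f k (k+n) ≤ 1 := by
  have hhyp : ∀ m, m < n+1 → Measurable (f (k+m)) ∧ (∀ x, f (k+m) x ≤ 1)
      ∧ qq κ f k (k+m) ≠ 0 := by
    intro m hm
    have h1 : k ≤ k + m := Nat.le_add_right _ _
    have h2 : k + m ≤ N := by omega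
    exact ⟨(hfpol _ h1 h2).1, (hfpol _ h1 h2).2, hq _ h1 h2⟩
  obtain ⟨hprob, hchain⟩ :=
    chain_eq_smul_mupred hκm hκp f k n (fun m hm => hhyp m (by omega))
  obtain ⟨hfm, hf1, hq0⟩ := hhyp n (by omega)
  have hqle : ∀ m, m < n+1 → qq κ f k (k+m) ≤ 1 := by
    intro m hm
    obtain ⟨hprobm, _⟩ :=
      chain_eq_smul_mupred hκm hκp f k m (fun m' hm' => hhyp m' (by omega))
    rw [qq_eq]
    calc ∫⁻ x, f (k+m) x ∂(mupredAux κ f k m)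
        ≤ ∫⁻ _, 1 ∂(mupredAux κ f k m) := lintegral_mono (hhyp m hm).2.1
      _ = 1 := by rw [lintegral_one, hprobm.measure_univ]
  have hqt : qq κ f k (k+n) ≠ ∞ := ((hqle n (by omega)).trans_lt ENNReal.one_lt_top).ne
  have hprodle : (∏ m ∈ Finset.range n, qq κ f k (k+m)) ≤ 1 :=
    Finset.prod_le_one (fun m _ => zero_le)
      (fun m hm => hqle m (by have := Finset.mem_range.mp hm; omega))
  have hprod0 : (∏ m ∈ Finset.range n, qq κ f k (k+m)) ≠ 0 :=
    Finset.prod_ne_zero_iff.2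
      (fun m hm => (hhyp m (by have := Finset.mem_range.mp hm; omega)).2.2)
  have h0' : (∫⁻ x, f (k+n) x ∂(mupredAux κ f k n)) ≠ 0 := by rw [← qq_eq]; exact hq0
  have ht' : (∫⁻ x, f (k+n) x ∂(mupredAux κ f k n)) ≠ ∞ := by rw [← qq_eq]; exact hqt
  refine ⟨?_, ?_, mul_ne_zero hprod0 hq0,
    ENNReal.mul_ne_top (hprodle.trans_lt ENNReal.one_lt_top).ne hqt, hqle n (by omega)⟩
  · rw [hchain, lintegral_smul_measure, smul_eq_mul,
      ← lintegral_mucond hfm (measurable_dsq z) hq0 hqt, mul_assoc]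
  · show IsProbabilityMeasure (condMeas f (k+n) (mupred κ f k (k+n)))
    rw [mupred_eq]
    exact condMeas_isProb hfm h0' ht'

end EstAux

namespace EstAux

lemma add_extract {A B A' : ℝ≥0∞} (h : A + B ≤ A' + B) (hB : B ≠ ∞) : A ≤ A' :=
  (ENNReal.add_le_add_iff_right hB).1 h

lemma sum_extract {M : ℕ} {T U : ℕ → ℝ≥0∞} {n : ℕ} (hn : n ∈ Finset.range M)
    (hTU : ∀ i ∈ (Finset.range M).erase n, U i = T i)
    (hle : ∑ i ∈ Finset.range M, T i ≤ ∑ i ∈ Finset.range M, U i)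
    (hfin : ∑ i ∈ Finset.range M, T i ≠ ∞) : T n ≤ U n := by
  rw [← Finset.add_sum_erase _ T hn, ← Finset.add_sum_erase _ U hn,
    Finset.sum_congr rfl hTU] at hle
  have hR : (∑ i ∈ (Finset.range M).erase n, T i) ≠ ∞ := by
    refine ne_of_lt (lt_of_le_of_lt (Finset.sum_le_sum_of_subset (Finset.erase_subset _ _)) ?_)
    exact lt_top_iff_ne_top.2 hfin
  exact (ENNReal.add_le_add_iff_right hR).1 hle

end EstAux

--AUXEND

/-- Closedness of the best-response map `𝔛` along convergent subsequences: if the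
policies converge to a non-degenerate policy `f` and the estimates converge
componentwise, then the limit estimates are a best response to `f`. (Here `fseq i`
plays the role of `f^(i+1)` and `xhat i` that of `x̂^(i)`, so `fseq i ∈ 𝔓(xhat i)`
and `xhat (i+1) ∈ 𝔛(fseq i)`.) -/
theorem estimates_closedness (κ : S → Measure S) (hκ : IsMarkov κ)
    (hA : Assumption1 κ)
    (k N : ℕ) (hkN : k ≤ N) (c' : ℕ → ℝ) (hc' : ∀ j, k ≤ j → j ≤ N → 0 < c' j)
    (xhat : ℕ → ℕ → S) (fseq : ℕ → ℕ → S → ℝ≥0∞)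
    (hPX : ∀ i, inP κ c' k N (xhat i) (fseq i) ∧ inX κ c' k N (fseq i) (xhat (i + 1)))
    (φ : ℕ → ℕ) (hφ : StrictMono φ)
    (f : ℕ → S → ℝ≥0∞) (hfpol : IsPolicy k N f) (hnd : NonDeg κ f k N)
    (hfconv : PolConv κ k N (fun l => fseq (φ l)) f)
    (xh : ℕ → S)
    (hxh : ∀ j, k ≤ j → j ≤ N →
      Tendsto (fun l => dS (xhat (φ l + 1) j) (xh j)) atTop (𝓝 0))
    (xh' : ℕ → S)
    (hxh' : ∀ j, k ≤ j → j ≤ N →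
      Tendsto (fun l => dS (xhat (φ l) j) (xh' j)) atTop (𝓝 0)) :
    inX κ c' k N f xh := by
  classical
  open EstAux in
  have κm : Measurable κ := EstAux.markov_measurable hκ
  have hκp : ∀ x, IsProbabilityMeasure (κ x) := hκ.1
  have hPol : ∀ i, IsPolicy k N (fseq i) := fun i => (hPX i).1.1
  have hfm : ∀ j, k ≤ j → j ≤ N → Measurable (f j) := fun j h1 h2 => (hfpol j h1 h2).1
  have hqne : ∀ j, k ≤ j → j ≤ N → qq κ f k j ≠ 0 := fun j h1 h2 => (hnd j h1 h2).ne'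
  have hcostfin : ∀ i, Cost κ c' k N (xhat (i+1)) (fseq i) ≤ ENNReal.ofReal (c' k) := by
    intro i
    calc Cost κ c' k N (xhat (i+1)) (fseq i) ≤ Cost κ c' k N (xhat i) (fseq i) :=
          (hPX i).2 (xhat i)
      _ ≤ Cost κ c' k N (xhat i) (fun _ _ => 0) :=
          (hPX i).1.2 _ (EstAux.zero_policy k N)
      _ = ENNReal.ofReal (c' k) := EstAux.cost_zero_policy hκp c' k N (xhat i) hkN
  have hev_half : ∀ᶠ l in atTop, ∀ j ∈ Finset.Icc k N,
      qq κ f k j / 2 ≤ qq κ (fseq (φ l)) k j := by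
    rw [Filter.eventually_all_finset]
    intro j hj
    obtain ⟨h1, h2⟩ := Finset.mem_Icc.mp hj
    have ht := (hfconv j h1 h2).2
    have hq0 : qq κ f k j ≠ 0 := hqne j h1 h2
    have hqt : qq κ f k j ≠ ∞ := by
      obtain ⟨n, rfl⟩ : ∃ n, j = k + n := ⟨j - k, by omega⟩
      exact ((EstAux.term_eq κm hκp hfpol hqne (by omega) origin).2.2.2.2.trans_lt
        ENNReal.one_lt_top).ne
    have hhalf : qq κ f k j / 2 < qq κ f k j := ENNReal.half_lt_self hq0 hqt
    filter_upwards [ht (Ioi_mem_nhds hhalf)] with l hl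
    exact le_of_lt hl
  have hq2pos : ∀ j, k ≤ j → j ≤ N → qq κ f k j / 2 ≠ 0 := by
    intro j h1 h2 hcontra
    rcases ENNReal.div_eq_zero_iff.mp hcontra with h | h
    · exact hqne j h1 h2 h
    · exact ENNReal.ofNat_ne_top h
  have hqposl : ∀ᶠ l in atTop, ∀ j, k ≤ j → j ≤ N → qq κ (fseq (φ l)) k j ≠ 0 := by
    filter_upwards [hev_half] with l hl j h1 h2
    have hle := hl j (Finset.mem_Icc.mpr ⟨h1, h2⟩)
    intro h0
    exact hq2pos j h1 h2 (le_antisymm (h0 ▸ hle) zero_le)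
  -- the (★) inequalities for the limit policy
  have star : ∀ n, k + n ≤ N → ∀ z : S,
      ∫⁻ x, ENNReal.ofReal (dS x (xh (k+n)) ^ 2) ∂(mucond κ f k (k+n))
        ≤ ∫⁻ x, ENNReal.ofReal (dS x z ^ 2) ∂(mucond κ f k (k+n)) := by
    intro n hn z
    have hnmem : n ∈ Finset.range (N+1-k) := Finset.mem_range.mpr (by omega)
    set β : ℝ≥0∞ := (∏ m ∈ Finset.range n, qq κ f k (k+m) / 2) * (qq κ f k (k+n) / 2)
      with hβ
    have hβ0 : β ≠ 0 := by
      apply mul_ne_zero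
      · exact Finset.prod_ne_zero_iff.2 (fun m hm => hq2pos (k+m) (Nat.le_add_right _ _)
          (by have := Finset.mem_range.mp hm; omega))
      · exact hq2pos (k+n) (Nat.le_add_right _ _) hn
    set Creal : ℝ := (ENNReal.ofReal (c' k) / β).toReal with hCreal
    have hCfin : ENNReal.ofReal (c' k) / β ≠ ∞ :=
      (ENNReal.div_lt_top ENNReal.ofReal_ne_top hβ0).ne
    -- total cost bound in decomposed form, per l
    have htot : ∀ l, ∑ i ∈ Finset.range (N+1-k),
        (∫⁻ x, fseq (φ l) (k+i) x
            * ENNReal.ofReal (dS x (xhat (φ l + 1) (k+i)) ^ 2)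
            ∂(chainM κ (fseq (φ l)) i k (κ origin))
          + ENNReal.ofReal (c' (k+i))
            * ∫⁻ x, (1 - fseq (φ l) (k+i) x) ∂(chainM κ (fseq (φ l)) i k (κ origin)))
        ≤ ENNReal.ofReal (c' k) := by
      intro l
      rw [← EstAux.cost_eq_sum κm c' k N (xhat (φ l + 1)) (fseq (φ l))
        (fun j h1 h2 => (hPol (φ l) j h1 h2).1)]
      exact hcostfin (φ l)
    refine EstAux.key_limit (fun l => mucond κ (fseq (φ l)) k (k+n)) (mucond κ f k (k+n))
      (EstAux.term_eq κm hκp hfpol hqne hn origin).2.1 ?_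
      ((hfconv (k+n) (Nat.le_add_right k n) hn).1) (xh (k+n))
      (fun l => xhat (φ l + 1) (k+n)) (hxh (k+n) (Nat.le_add_right k n) hn) Creal ?_ ?_ z
    · -- eventual probability measures
      filter_upwards [hqposl] with l hl
      exact (EstAux.term_eq κm hκp (hPol (φ l)) hl hn origin).2.1
    · -- eventual uniform second-moment bound
      filter_upwards [hev_half, hqposl] with l hl1 hl2
      obtain ⟨he1, _, hc0, hct, _⟩ :=
        EstAux.term_eq κm hκp (hPol (φ l)) hl2 hn (xhat (φ l + 1) (k+n))
      have hAle : ((∏ m ∈ Finset.range n, qq κ (fseq (φ l)) k (k+m))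
            * qq κ (fseq (φ l)) k (k+n))
          * ∫⁻ x, ENNReal.ofReal (dS x (xhat (φ l + 1) (k+n)) ^ 2)
              ∂(mucond κ (fseq (φ l)) k (k+n))
          ≤ ENNReal.ofReal (c' k) := by
        rw [← he1]
        calc ∫⁻ x, fseq (φ l) (k+n) x
              * ENNReal.ofReal (dS x (xhat (φ l + 1) (k+n)) ^ 2)
              ∂(chainM κ (fseq (φ l)) n k (κ origin))
            ≤ ∫⁻ x, fseq (φ l) (k+n) x
              * ENNReal.ofReal (dS x (xhat (φ l + 1) (k+n)) ^ 2)
              ∂(chainM κ (fseq (φ l)) n k (κ origin))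
              + ENNReal.ofReal (c' (k+n))
                * ∫⁻ x, (1 - fseq (φ l) (k+n) x) ∂(chainM κ (fseq (φ l)) n k (κ origin)) :=
              le_self_add
          _ ≤ _ := le_trans (Finset.single_le_sum (f := fun i => ∫⁻ x, fseq (φ l) (k+i) x
              * ENNReal.ofReal (dS x (xhat (φ l + 1) (k+i)) ^ 2)
              ∂(chainM κ (fseq (φ l)) i k (κ origin))
              + ENNReal.ofReal (c' (k+i))
                * ∫⁻ x, (1 - fseq (φ l) (k+i) x) ∂(chainM κ (fseq (φ l)) i k (κ origin))) (fun i _ => zero_le) hnmem) (htot l)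
      have hβle : β ≤ (∏ m ∈ Finset.range n, qq κ (fseq (φ l)) k (k+m))
          * qq κ (fseq (φ l)) k (k+n) := by
        rw [hβ]
        refine mul_le_mul' (Finset.prod_le_prod' fun m hm => ?_)
          (hl1 (k+n) (Finset.mem_Icc.mpr ⟨Nat.le_add_right _ _, hn⟩))
        exact hl1 (k+m) (Finset.mem_Icc.mpr ⟨Nat.le_add_right _ _,
          by have := Finset.mem_range.mp hm; omega⟩)
      have hβI : β * ∫⁻ x, ENNReal.ofReal (dS x (xhat (φ l + 1) (k+n)) ^ 2)
          ∂(mucond κ (fseq (φ l)) k (k+n)) ≤ ENNReal.ofReal (c' k) :=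
        le_trans (mul_le_mul_left hβle _) hAle
      have hI : ∫⁻ x, ENNReal.ofReal (dS x (xhat (φ l + 1) (k+n)) ^ 2)
          ∂(mucond κ (fseq (φ l)) k (k+n)) ≤ ENNReal.ofReal (c' k) / β := by
        rw [ENNReal.le_div_iff_mul_le (Or.inl hβ0) (Or.inr ENNReal.ofReal_ne_top)]
        rw [mul_comm]
        exact hβI
      rw [hCreal, ENNReal.ofReal_toReal hCfin]
      exact hI
    · -- eventual minimality at the chosen index
      intro z'
      filter_upwards [hqposl] with l hl
      set u := Function.update (xhat (φ l + 1)) (k+n) z' with hu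
      have hcost := (hPX (φ l)).2 u
      rw [EstAux.cost_eq_sum κm c' k N (xhat (φ l + 1)) (fseq (φ l))
          (fun j h1 h2 => (hPol (φ l) j h1 h2).1),
        EstAux.cost_eq_sum κm c' k N u (fseq (φ l))
          (fun j h1 h2 => (hPol (φ l) j h1 h2).1)] at hcost
      have hTn := EstAux.sum_extract hnmem (fun i hi => ?_) hcost
        (ne_of_lt (lt_of_le_of_lt (htot l) ENNReal.ofReal_lt_top))
      · -- from T n ≤ U n, peel off the constant part, then the scalars
        have hBfin : ENNReal.ofReal (c' (k+n))
            * ∫⁻ x, (1 - fseq (φ l) (k+n) x) ∂(chainM κ (fseq (φ l)) n k (κ origin)) ≠ ∞ := by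
          refine ne_of_lt (lt_of_le_of_lt (le_trans le_add_self
            (le_trans (Finset.single_le_sum (f := fun i => ∫⁻ x, fseq (φ l) (k+i) x
              * ENNReal.ofReal (dS x (xhat (φ l + 1) (k+i)) ^ 2)
              ∂(chainM κ (fseq (φ l)) i k (κ origin))
              + ENNReal.ofReal (c' (k+i))
                * ∫⁻ x, (1 - fseq (φ l) (k+i) x) ∂(chainM κ (fseq (φ l)) i k (κ origin))) (fun i _ => zero_le) hnmem) (htot l)))
            ENNReal.ofReal_lt_top)
        have hA := EstAux.add_extract hTn hBfin
        have huv : u (k+n) = z' := Function.update_self _ _ _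
        rw [huv] at hA
        obtain ⟨he1, _, hc0, hct, _⟩ :=
          EstAux.term_eq κm hκp (hPol (φ l)) hl hn (xhat (φ l + 1) (k+n))
        obtain ⟨he2, _, _, _, _⟩ := EstAux.term_eq κm hκp (hPol (φ l)) hl hn z'
        rw [he1, he2] at hA
        exact (ENNReal.mul_le_mul_iff_right hc0 hct).1 hA
      · -- off-index terms agree
        have hne : k + i ≠ k + n := by have := (Finset.mem_erase.mp hi).1; omega
        rw [hu]
        rw [Function.update_of_ne hne]
  -- conclude: compare costs termwise
  intro yhat
  rw [EstAux.cost_eq_sum κm c' k N xh f hfm, EstAux.cost_eq_sum κm c' k N yhat f hfm]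
  apply Finset.sum_le_sum
  intro i hi
  have hki : k + i ≤ N := by have := Finset.mem_range.mp hi; omega
  apply add_le_add _ le_rfl
  obtain ⟨he1, _, _, _, _⟩ := EstAux.term_eq κm hκp hfpol hqne hki (xh (k+i))
  obtain ⟨he2, _, _, _, _⟩ := EstAux.term_eq κm hκp hfpol hqne hki (yhat (k+i))
  rw [he1, he2]
  exact mul_le_mul_right (star i hki (yhat (k+i))) _


end
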